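/- Let S1 be a natural number and γ > 0 real. Define p(i) = C(S1, i) (1/3)^i (2/3)^(S1−i) for 0 ≤ i ≤ S1 (the Binomial(S1, 1/3) probability mass function), with p(i) = 0 outside {0,...,S1}. Then p satisfies the stationary master equation of the reduced intermediate system: for every 0 ≤ i ≤ S1, ((γ/2)·(S1−i) + γ·i)·p(i) = (γ/2)·(S1−(i−1))·p(i−1) + γ·(i+1)·p(i+1), where terms with argument outside {0,...,S1} are zero. Consequently the mean of p is S1/3, i.e. the invariant distribution of the reduced intermediate system has E[X3] = S1/3 and E[S2] = 2S1/3. -/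
import Mathlib


open Finset

noncomputable def binQ (S1 n : ℕ) : ℝ :=
  (S1.choose n : ℝ) * (1 / 3 : ℝ) ^ n * (2 / 3 : ℝ) ^ (S1 - n)

lemma binQ_db (S1 n : ℕ) (h : n < S1) :
    (1/2 : ℝ) * ((S1:ℝ) - n) * binQ S1 n = ((n:ℝ)+1) * binQ S1 (n+1) := by
  unfold binQ
  have hc : (S1.choose (n+1) : ℝ) * ((n:ℝ)+1) = (S1.choose n : ℝ) * ((S1:ℝ) - n) := by
    have h1 := Nat.choose_succ_right_eq S1 n
    have h2 : ((S1.choose (n+1) * (n+1) : ℕ) : ℝ) = ((S1.choose n * (S1 - n) : ℕ) : ℝ) := by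
      exact_mod_cast congrArg (Nat.cast (R := ℝ)) h1
    push_cast [Nat.cast_sub h.le] at h2
    linarith
  have hpow : (2/3:ℝ)^(S1-n) = (2/3) * (2/3)^(S1-(n+1)) := by
    have he : S1 - n = (S1 - (n+1)) + 1 := by omega
    rw [he, pow_succ]; ring
  rw [hpow, pow_succ]
  linear_combination (-(1:ℝ)/3 * (1/3)^n * (2/3)^(S1-(n+1))) * hc

lemma binQ_sum (S1 : ℕ) : ∑ n ∈ range (S1+1), binQ S1 n = 1 := by
  have h := add_pow (1/3 : ℝ) (2/3) S1
  have : ((1:ℝ)/3 + 2/3) ^ S1 = 1 := by norm_num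
  rw [this] at h
  rw [h]
  refine Finset.sum_congr rfl fun n hn => ?_
  unfold binQ; ring

lemma binQ_mean (S1 : ℕ) : ∑ n ∈ range (S1+1), (n:ℝ) * binQ S1 n = (S1:ℝ)/3 := by
  cases S1 with
  | zero => simp [binQ]
  | succ m =>
    rw [Finset.sum_range_succ']
    simp only [Nat.cast_zero, zero_mul, add_zero]
    have key : ∀ j ∈ range (m+1), ((j+1 : ℕ):ℝ) * binQ (m+1) (j+1)
        = ((m:ℝ)+1) * (1/3) * binQ m j := by
      intro j hj
      simp only [mem_range] at hj
      unfold binQ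
      have hc : ((m:ℝ)+1) * (m.choose j : ℝ) = ((m+1).choose (j+1) : ℝ) * ((j:ℝ)+1) := by
        exact_mod_cast congrArg (Nat.cast (R := ℝ)) (Nat.add_one_mul_choose_eq m j)
      have he : (m+1) - (j+1) = m - j := by omega
      rw [he, pow_succ]
      push_cast
      linear_combination (-(1:ℝ)/3 * (1/3)^j * (2/3)^(m-j)) * hc
    rw [Finset.sum_congr rfl key, ← Finset.mul_sum, binQ_sum]
    push_cast; ring

/-- The Binomial(S1, 1/3) distribution satisfies the stationary master equation
of the reduced intermediate system with up-rate `(γ/2)·(S1−i)` and down-rate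
`γ·i` (terms with argument outside `{0,...,S1}` are zero), and consequently its
mean is `S1/3`:  `E[X3] = S1/3` and `E[S2] = E[S1 − X3] = 2·S1/3`. -/
theorem binomial_invariant_reduced_intermediate_system
    (S1 : ℕ) (gamma : ℝ) (hg : 0 < gamma)
    (p : ℤ → ℝ)
    (hp : ∀ i : ℤ, p i =
      if 0 ≤ i ∧ i ≤ (S1 : ℤ) then
        (S1.choose i.toNat : ℝ) * (1 / 3 : ℝ) ^ i.toNat *
          (2 / 3 : ℝ) ^ (S1 - i.toNat)
      else 0) :
    (∀ i : ℤ, 0 ≤ i → i ≤ (S1 : ℤ) →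
      (gamma / 2 * ((S1 : ℝ) - (i : ℝ)) + gamma * (i : ℝ)) * p i =
        gamma / 2 * ((S1 : ℝ) - ((i : ℝ) - 1)) * p (i - 1) +
          gamma * ((i : ℝ) + 1) * p (i + 1)) ∧
    (∑ i ∈ Finset.range (S1 + 1), (i : ℝ) * p i) = (S1 : ℝ) / 3 ∧
    (∑ i ∈ Finset.range (S1 + 1), ((S1 : ℝ) - (i : ℝ)) * p i) =
      2 * (S1 : ℝ) / 3 := by
  have hp' : ∀ n : ℕ, n ≤ S1 → p (n : ℤ) = binQ S1 n := by
    intro n hn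
    rw [hp]
    rw [if_pos ⟨Int.ofNat_nonneg n, by exact_mod_cast hn⟩]
    simp [binQ]
  have hp0 : ∀ i : ℤ, i < 0 ∨ (S1:ℤ) < i → p i = 0 := by
    intro i hi
    rw [hp, if_neg (by omega)]
  have hpsum : ∑ i ∈ Finset.range (S1 + 1), p (i : ℤ) =
      ∑ i ∈ Finset.range (S1 + 1), binQ S1 i :=
    Finset.sum_congr rfl fun i hi => hp' i (by simpa [Nat.lt_succ_iff] using hi)
  refine ⟨?_, ?_, ?_⟩
  · intro i h0 h1
    obtain ⟨n, rfl⟩ := Int.eq_ofNat_of_zero_le h0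
    have hn : n ≤ S1 := by exact_mod_cast h1
    have e0 : p (n : ℤ) = binQ S1 n := hp' n hn
    have claim1 : gamma / 2 * ((S1:ℝ) - n) * p (n : ℤ)
        = gamma * ((n:ℝ) + 1) * p ((n : ℤ) + 1) := by
      rcases lt_or_eq_of_le hn with hlt | heq
      · have e1 : p ((n:ℤ) + 1) = binQ S1 (n+1) := by
          rw [show ((n:ℤ) + 1) = ((n+1 : ℕ) : ℤ) by push_cast; ring]
          exact hp' (n+1) hlt
        rw [e0, e1]
        have := binQ_db S1 n hlt
        linear_combination gamma * this
      · have e1 : p ((n:ℤ) + 1) = 0 := hp0 _ (Or.inr (by omega))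
        rw [e1, heq]
        simp
    have claim2 : gamma * (n:ℝ) * p (n : ℤ)
        = gamma / 2 * ((S1:ℝ) - ((n:ℝ) - 1)) * p ((n : ℤ) - 1) := by
      cases n with
      | zero => simp [hp0 (-1 : ℤ) (Or.inl (by omega))]
      | succ m =>
        have hm : m < S1 := by omega
        have e1 : p (((m+1 : ℕ) : ℤ) - 1) = binQ S1 m := by
          rw [show (((m+1 : ℕ) : ℤ) - 1) = ((m : ℕ) : ℤ) by push_cast; ring]
          exact hp' m hm.le
        rw [e1, e0]
        have := binQ_db S1 m hm
        push_cast
        linear_combination (-gamma) * this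
    push_cast
    push_cast at claim1 claim2
    linarith
  · calc ∑ i ∈ Finset.range (S1 + 1), (i : ℝ) * p (i : ℤ)
        = ∑ i ∈ Finset.range (S1 + 1), (i : ℝ) * binQ S1 i :=
          Finset.sum_congr rfl fun i hi => by
            rw [hp' i (by simpa [Nat.lt_succ_iff] using hi)]
      _ = (S1:ℝ)/3 := binQ_mean S1
  · have h1 : ∑ i ∈ Finset.range (S1 + 1), p (i : ℤ) = 1 := by
      rw [hpsum, binQ_sum]
    have h2 : ∑ i ∈ Finset.range (S1 + 1), (i : ℝ) * p (i : ℤ) = (S1:ℝ)/3 := by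
      calc ∑ i ∈ Finset.range (S1 + 1), (i : ℝ) * p (i : ℤ)
          = ∑ i ∈ Finset.range (S1 + 1), (i : ℝ) * binQ S1 i :=
            Finset.sum_congr rfl fun i hi => by
              rw [hp' i (by simpa [Nat.lt_succ_iff] using hi)]
        _ = (S1:ℝ)/3 := binQ_mean S1
    have : ∑ i ∈ Finset.range (S1 + 1), ((S1:ℝ) - (i:ℝ)) * p (i : ℤ)
        = (S1:ℝ) * ∑ i ∈ Finset.range (S1 + 1), p (i : ℤ)
          - ∑ i ∈ Finset.range (S1 + 1), (i : ℝ) * p (i : ℤ) := by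
      rw [Finset.mul_sum, ← Finset.sum_sub_distrib]
      exact Finset.sum_congr rfl fun i _ => by ring
    rw [this, h1, h2]; ring
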